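/- For every integer k ≥ 1 we have α_k ≤ γ_k ≤ η_k, where α_k, γ_k, η_k are the unique roots in (1,2) of x^{k+1}-2x^k+x-1, x^{k+1}-x^k-⋯-x-1, and 2x^{k+1}-4x^k+1 respectively. -/

import Mathlib

theorem alpha_le_gamma_le_eta (k : ℕ) (hk : 1 ≤ k) (α γ η : ℝ)
    (hα : α ∈ Set.Ioo (1:ℝ) 2 ∧ α^(k+1) - 2*α^k + α - 1 = 0)
    (hγ : γ ∈ Set.Ioo (1:ℝ) 2 ∧ γ^(k+1) - ∑ i ∈ Finset.range (k+1), γ^i = 0)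
    (hη : η ∈ Set.Ioo (1:ℝ) 2 ∧ 2*η^(k+1) - 4*η^k + 1 = 0) :
    α ≤ γ ∧ γ ≤ η := by
  obtain ⟨⟨hα1, hα2⟩, hαe⟩ := hα
  obtain ⟨⟨hγ1, hγ2⟩, hγe⟩ := hγ
  obtain ⟨⟨hη1, hη2⟩, hηe⟩ := hη
  set f : ℝ → ℝ := fun x => x ^ (k+1) * (2 - x) with hf
  set c : ℝ := 2 * (k+1) / (k+2) with hc
  have hk2 : (0:ℝ) < (k:ℝ) + 2 := by positivity
  have hk1 : (1:ℝ) ≤ (k:ℝ) := by exact_mod_cast hk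
  have hc1 : 1 < c := by rw [hc, lt_div_iff₀ hk2]; linarith
  have hc2 : c < 2 := by rw [hc, div_lt_iff₀ hk2]; linarith
  -- derivative of f
  have hderiv : ∀ x : ℝ, HasDerivAt f ((k+1) * x ^ k * (2 - x) - x ^ (k+1)) x := by
    intro x
    have h1 : HasDerivAt (fun x : ℝ => x ^ (k+1)) ((k+1) * x ^ k) x := by
      simpa using hasDerivAt_pow (k+1) x
    have h2 : HasDerivAt (fun x : ℝ => 2 - x) (-1) x := by
      simpa using (hasDerivAt_id x).const_sub 2
    have := h1.mul h2
    exact this.congr_deriv (by ring)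
  have hcont : Continuous f := by
    fun_prop
  have hmono : StrictMonoOn f (Set.Icc 1 c) := by
    apply strictMonoOn_of_deriv_pos (convex_Icc 1 c) hcont.continuousOn
    intro x hx
    rw [interior_Icc] at hx
    rw [(hderiv x).deriv]
    have hx1 : 1 < x := hx.1
    have hxc : x < c := hx.2
    have hxk : (0:ℝ) < x ^ k := by positivity
    have h2 : ((k:ℝ)+2) * x < 2 * ((k:ℝ)+1) := by
      rw [hc, lt_div_iff₀ hk2] at hxc; linarith [hxc]
    have : ((k:ℝ)+1) * x ^ k * (2 - x) - x ^ (k+1)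
        = x ^ k * (2*((k:ℝ)+1) - ((k:ℝ)+2) * x) := by ring
    rw [this]
    exact mul_pos hxk (by linarith)
  have hanti : StrictAntiOn f (Set.Icc c 2) := by
    apply strictAntiOn_of_deriv_neg (convex_Icc c 2) hcont.continuousOn
    intro x hx
    rw [interior_Icc] at hx
    rw [(hderiv x).deriv]
    have hxc : c < x := hx.1
    have hx0 : (0:ℝ) < x := lt_trans (by linarith) hxc
    have hxk : (0:ℝ) < x ^ k := by positivity
    have h2 : 2 * ((k:ℝ)+1) < ((k:ℝ)+2) * x := by
      rw [hc, div_lt_iff₀ hk2] at hxc; linarith [hxc]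
    have : ((k:ℝ)+1) * x ^ k * (2 - x) - x ^ (k+1)
        = x ^ k * (2*((k:ℝ)+1) - ((k:ℝ)+2) * x) := by ring
    rw [this]
    exact mul_neg_of_pos_of_neg hxk (by linarith)
  have hf1 : f 1 = 1 := by simp [hf]; norm_num
  -- f γ = 1
  have hfγ : f γ = 1 := by
    have hne : γ ≠ 1 := ne_of_gt hγ1
    have hsum := geom_sum_eq hne (k+1)
    rw [hsum] at hγe
    have hγ1' : γ - 1 ≠ 0 := sub_ne_zero.mpr hne
    have : γ ^ (k+1) * (γ - 1) - (γ ^ (k+1) - 1) = 0 := by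
      field_simp at hγe
      linarith [hγe]
    simp only [hf]
    nlinarith [this]
  -- f α = α * (α - 1) ≥ 1
  have hαk : α ^ k * (2 - α) = α - 1 := by
    linear_combination (pow_succ α k) - hαe
  have hfα : f α = α * (α - 1) := by
    show α ^ (k+1) * (2 - α) = α * (α - 1)
    linear_combination α * hαk + (2 - α) * (pow_succ α k)
  have hαge : 1 ≤ f α := by
    have hpow : α ^ 1 ≤ α ^ k := pow_le_pow_right₀ hα1.le hk
    rw [pow_one] at hpow
    have h2α : 0 < 2 - α := by linarith
    have : α * (2 - α) ≤ α ^ k * (2 - α) := by nlinarith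
    rw [hfα]
    nlinarith [hαk]
  -- f η = η / 2 < 1
  have hηk : 2 * (η ^ k * (2 - η)) = 1 := by
    linear_combination 2 * (pow_succ η k) - hηe
  have hfη : f η = η / 2 := by
    show η ^ (k+1) * (2 - η) = η / 2
    linear_combination (η/2) * hηk + (2 - η) * (pow_succ η k)
  have hfη1 : f η < 1 := by rw [hfη]; linarith
  -- γ > c
  have hγc : c < γ := by
    by_contra h
    push_neg at h
    have := hmono (Set.mem_Icc.mpr ⟨le_refl 1, hc1.le⟩) (Set.mem_Icc.mpr ⟨hγ1.le, h⟩) hγ1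
    rw [hf1, hfγ] at this
    exact lt_irrefl 1 this
  constructor
  · -- α ≤ γ
    by_contra h
    push_neg at h
    have := hanti (Set.mem_Icc.mpr ⟨hγc.le, hγ2.le⟩)
      (Set.mem_Icc.mpr ⟨le_of_lt (lt_trans hγc h), hα2.le⟩) h
    rw [hfγ] at this
    linarith
  · -- γ ≤ η
    by_contra h
    push_neg at h
    rcases le_or_gt η c with hcase | hcase
    · have := hmono (Set.mem_Icc.mpr ⟨le_refl 1, hc1.le⟩)
        (Set.mem_Icc.mpr ⟨hη1.le, hcase⟩) hη1
      rw [hf1] at this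
      linarith
    · have := hanti (Set.mem_Icc.mpr ⟨hcase.le, hη2.le⟩)
        (Set.mem_Icc.mpr ⟨hγc.le, hγ2.le⟩) h
      rw [hfγ] at this
      linarith
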